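/- Let Σ be a counting signature with exactly m counting predicates, let 𝔄 be a chromatic, Y-branching structure interpreting Σ, let π be a 1-type over Σ, and let B ⊆ A be a π-patch. If 𝔄 is (mY+1)²-differentiated, then there exists a structure 𝔄' that is a ({π},B)-approximation to 𝔄 in which all elements of B have the same {π}-profile. -/

import Mathlib

/-- A counting signature: finite sets of unary and binary predicate symbols,
with a distinguished finite set of binary predicates (the counting predicates). -/
structure CSig where
  U : Type
  B : Type
  [instU : Fintype U]
  [instDU : DecidableEq U]
  [instB : Fintype B]
  [instDB : DecidableEq B]
  counting : Finset B

attribute [instance] CSig.instU CSig.instDU CSig.instB CSig.instDB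

/-- A structure interpreting a counting signature over domain `A`. -/
structure Struc (σ : CSig) (A : Type) where
  unary : σ.U → A → Bool
  binary : σ.B → A → A → Bool

/-- A 1-type over `σ`: a truth assignment to all literals in the single variable x. -/
structure OneType (σ : CSig) where
  u : σ.U → Bool
  d : σ.B → Bool
deriving DecidableEq, Fintype

/-- A 2-type over `σ`: a truth assignment to all equality-free literals in x, y. -/
structure TwoType (σ : CSig) where
  ux : σ.U → Bool
  uy : σ.U → Bool
  dx : σ.B → Bool
  dy : σ.B → Bool
  rxy : σ.B → Bool
  ryx : σ.B → Bool
deriving DecidableEq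

variable {σ : CSig} {A : Type}

/-- Explicit equivalence of `TwoType σ` with a product, giving finiteness. -/
def TwoType.equivProd (σ : CSig) :
    TwoType σ ≃ ((σ.U → Bool) × (σ.U → Bool) × (σ.B → Bool) × (σ.B → Bool) ×
      (σ.B → Bool) × (σ.B → Bool)) where
  toFun τ := ⟨τ.ux, τ.uy, τ.dx, τ.dy, τ.rxy, τ.ryx⟩
  invFun p := ⟨p.1, p.2.1, p.2.2.1, p.2.2.2.1, p.2.2.2.2.1, p.2.2.2.2.2⟩
  left_inv τ := rfl
  right_inv p := rfl

instance : Fintype (TwoType σ) := Fintype.ofEquiv _ (TwoType.equivProd σ).symm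

/-- The result of transposing x and y in a 2-type. -/
def TwoType.inv (τ : TwoType σ) : TwoType σ := ⟨τ.uy, τ.ux, τ.dy, τ.dx, τ.ryx, τ.rxy⟩

/-- The 1-type (of x) included in a 2-type. -/
def TwoType.tp1 (τ : TwoType σ) : OneType σ := ⟨τ.ux, τ.dx⟩

/-- tp₂(τ) = tp₁(τ⁻¹). -/
def TwoType.tp2 (τ : TwoType σ) : OneType σ := ⟨τ.uy, τ.dy⟩

/-- The 1-type of an element. -/
def Struc.tp1 (S : Struc σ A) (a : A) : OneType σ :=
  ⟨fun p => S.unary p a, fun f => S.binary f a a⟩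

/-- The 2-type of a pair of (distinct) elements. -/
def Struc.tp2 (S : Struc σ A) (a b : A) : TwoType σ :=
  ⟨fun p => S.unary p a, fun p => S.unary p b,
   fun f => S.binary f a a, fun f => S.binary f b b,
   fun f => S.binary f a b, fun f => S.binary f b a⟩

/-- A 2-type is a message-type if it contains f(x,y) for some counting predicate f. -/
def IsMessage (σ : CSig) (τ : TwoType σ) : Prop := ∃ f ∈ σ.counting, τ.rxy f = true

instance : DecidablePred (IsMessage σ) := fun τ => by unfold IsMessage; infer_instance

/-- A message-type whose inverse is also a message-type. -/
def IsInvertible (σ : CSig) (τ : TwoType σ) : Prop := IsMessage σ τ ∧ IsMessage σ τ.inv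

instance : DecidablePred (IsInvertible σ) := fun τ => by unfold IsInvertible; infer_instance

/-- A 2-type is silent if neither it nor its inverse is a message-type. -/
def IsSilent (σ : CSig) (τ : TwoType σ) : Prop := ¬ IsMessage σ τ ∧ ¬ IsMessage σ τ.inv

/-- The (sub)type of message-types over σ. -/
def MsgType (σ : CSig) := {τ : TwoType σ // IsMessage σ τ}

instance : Fintype (MsgType σ) := Subtype.fintype _
instance : DecidableEq (MsgType σ) := fun a b => by
  exact (inferInstance : DecidableEq {τ : TwoType σ // IsMessage σ τ}) a b

/-- Y-branching: every element sends at most Y messages along each counting predicate. -/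
def Struc.Branching (S : Struc σ A) (Y : ℕ) : Prop :=
  ∀ a : A, ∀ f ∈ σ.counting, {b : A | b ≠ a ∧ S.binary f a b = true}.encard ≤ (Y : ℕ∞)

def Struc.FinitelyBranching (S : Struc σ A) : Prop := ∃ Y : ℕ, S.Branching Y

/-- Chromatic: distinct elements connected by a chain of 1 or 2 invertible
message-types have distinct 1-types. -/
def Struc.Chromatic (S : Struc σ A) : Prop :=
  (∀ a a' : A, a ≠ a' → IsInvertible σ (S.tp2 a a') → S.tp1 a ≠ S.tp1 a') ∧
  (∀ a a' a'' : A, a ≠ a' → a' ≠ a'' → a ≠ a'' →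
     IsInvertible σ (S.tp2 a a') → IsInvertible σ (S.tp2 a' a'') → S.tp1 a ≠ S.tp1 a'')

/-- Z-differentiated: each 1-type is realized either at most once or more than Z times. -/
def Struc.Differentiated (S : Struc σ A) (Z : ℕ) : Prop :=
  ∀ π : OneType σ, {a : A | S.tp1 a = π}.encard ≤ 1 ∨ (Z : ℕ∞) < {a : A | S.tp1 a = π}.encard

/-- π and π' form a noisy pair: no silent 2-type connects an element of 1-type π
to an element of 1-type π'. -/
def NoisyPair (S : Struc σ A) (π π' : OneType σ) : Prop :=
  ¬ ∃ a a' : A, a ≠ a' ∧ S.tp1 a = π ∧ S.tp1 a' = π' ∧ IsSilent σ (S.tp2 a a')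

/-- The Π-profile of a: for each message-type μ, the number of elements b with 1-type
in Π such that tp[a,b] = μ. -/
noncomputable def Struc.pr (S : Struc σ A) (P : Set (OneType σ)) (a : A) : MsgType σ → ℕ∞ :=
  fun μ => {b : A | b ≠ a ∧ S.tp1 b ∈ P ∧ S.tp2 a b = μ.1}.encard

/-- The Π-count of a: for each counting predicate f, the number of elements b ≠ a with
1-type in Π such that f[a,b] holds. -/
noncomputable def Struc.ct (S : Struc σ A) (P : Set (OneType σ)) (a : A) :
    {f : σ.B // f ∈ σ.counting} → ℕ∞ :=
  fun f => {b : A | b ≠ a ∧ S.tp1 b ∈ P ∧ S.binary f.1 a b = true}.encard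

/-- A Π-group: all elements share the same 1-type and the same Π-count. -/
def PiGroup (S : Struc σ A) (P : Set (OneType σ)) (B : Set A) : Prop :=
  ∀ a ∈ B, ∀ b ∈ B, S.tp1 a = S.tp1 b ∧ S.ct P a = S.ct P b

/-- A π-patch: a {π}-group all of whose elements have {π}-profiles agreeing on the
invertible message-types (the first M* coordinates). -/
def PiPatch (S : Struc σ A) (π : OneType σ) (B : Set A) : Prop :=
  PiGroup S {π} B ∧
  ∀ a ∈ B, ∀ b ∈ B, ∀ μ : MsgType σ, IsInvertible σ μ.1 → S.pr {π} a μ = S.pr {π} b μ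

/-- τ is realized in S. -/
def Realizes2 (S : Struc σ A) (τ : TwoType σ) : Prop := ∃ a b : A, a ≠ b ∧ S.tp2 a b = τ

/-- (Π,B)-approximation. -/
def PiBApprox (S S' : Struc σ A) (P : Set (OneType σ)) (B : Set A) : Prop :=
  S'.Chromatic ∧
  (∀ τ : TwoType σ, Realizes2 S' τ → Realizes2 S τ) ∧
  ∀ a : A,
    S'.tp1 a = S.tp1 a ∧
    S'.pr Pᶜ a = S.pr Pᶜ a ∧
    (a ∉ B → S'.pr Set.univ a = S.pr Set.univ a) ∧
    (a ∈ B → S'.ct P a = S.ct P a)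
/-- A star-type: a 1-type together with a vector of multiplicities indexed by the
message-types. -/
structure StarType (σ : CSig) where
  tp : OneType σ
  v : MsgType σ → ℕ
deriving DecidableEq

/-- The defining condition on star-types: v(μ) > 0 implies tp₁(μ) = π. -/
def StarType.IsValid (s : StarType σ) : Prop :=
  ∀ μ : MsgType σ, 0 < s.v μ → μ.1.tp1 = s.tp

/-- The star-type of an element: its 1-type together with its profile. -/
noncomputable def StarOf (S : Struc σ A) (a : A) : StarType σ where
  tp := S.tp1 a
  v := fun μ => ({b : A | b ≠ a ∧ S.tp2 a b = μ.1}.encard).toNat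

/-- X-sparse: at most X distinct star-types are realized. -/
noncomputable def Struc.Sparse (S : Struc σ A) (X : ℕ) : Prop :=
  {st : StarType σ | ∃ a : A, StarOf S a = st}.encard ≤ (X : ℕ∞)

/-- A chromatic star-type: for every 1-type π', the multiplicities of invertible
message-types μ with tp₂(μ) = π' sum to at most 1, and to 0 when π' = tp. -/
def StarType.Chromatic (s : StarType σ) : Prop :=
  ∀ π' : OneType σ,
    (∑ μ ∈ Finset.univ.filter (fun μ : MsgType σ => IsInvertible σ μ.1 ∧ μ.1.tp2 = π'),
        s.v μ) ≤ 1 ∧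
    (π' = s.tp →
      (∑ μ ∈ Finset.univ.filter (fun μ : MsgType σ => IsInvertible σ μ.1 ∧ μ.1.tp2 = π'),
        s.v μ) = 0)

/-- A frame over σ: a finite set of (pairwise distinct) star-types, a set I of
unordered pairs of 1-types, and a choice θ of a silent 2-type for each pair in I. -/
structure Frame (σ : CSig) where
  stars : Finset (StarType σ)
  valid : ∀ s ∈ stars, s.IsValid
  I : Set (Sym2 (OneType σ))
  θ : Sym2 (OneType σ) → TwoType σ
  hθ : ∀ p ∈ I, IsSilent σ (θ p) ∧ Sym2.mk (θ p).tp1 (θ p).tp2 = p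

/-- Y-bounded frame: all star-type multiplicities are at most Y. -/
def Frame.Bounded (F : Frame σ) (Y : ℕ) : Prop :=
  ∀ s ∈ F.stars, ∀ μ : MsgType σ, s.v μ ≤ Y

/-- A chromatic frame: all its star-types are chromatic. -/
def Frame.Chromatic (F : Frame σ) : Prop := ∀ s ∈ F.stars, s.Chromatic

/-- F describes S: the stars of F are exactly the realized star-types; I consists of the
non-noisy pairs of 1-types; and each θ-value is realized. -/
def Describes (F : Frame σ) (S : Struc σ A) : Prop :=
  (∀ st : StarType σ, st ∈ F.stars ↔ ∃ a : A, StarOf S a = st) ∧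
  (∀ π π' : OneType σ, Sym2.mk π π' ∈ F.I ↔ ¬ NoisyPair S π π') ∧
  (∀ p ∈ F.I, ∃ a b : A, a ≠ b ∧ S.tp2 a b = F.θ p)

/-- The number M* of invertible message-types over σ. -/
def MstarCard (σ : CSig) : ℕ :=
  (Finset.univ.filter (fun μ : MsgType σ => IsInvertible σ μ.1)).card

/-- p_{ik} = 1: the star-type sends no message to any element of 1-type π. -/
def PZero (s : StarType σ) (π : OneType σ) : Prop :=
  ∀ μ : MsgType σ, μ.1.tp2 = π → s.v μ = 0

instance (s : StarType σ) (π : OneType σ) : Decidable (PZero s π) := by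
  unfold PZero; infer_instance

/-- r_{ik}: total multiplicity of non-invertible message-types with tp₂ = π. -/
def RCoeff (s : StarType σ) (π : OneType σ) : ℕ :=
  ∑ μ ∈ Finset.univ.filter (fun μ : MsgType σ => ¬ IsInvertible σ μ.1 ∧ μ.1.tp2 = π), s.v μ

/-- s_{ik}: total multiplicity of message-types with tp₂ = π. -/
def SCoeff (s : StarType σ) (π : OneType σ) : ℕ :=
  ∑ μ ∈ Finset.univ.filter (fun μ : MsgType σ => μ.1.tp2 = π), s.v μ

/-- u_i = Σ_k o_{ik} w_k. -/
def Frame.uVal (F : Frame σ) (w : StarType σ → ℕ) (π : OneType σ) : ℕ :=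
  ∑ s ∈ F.stars.filter (fun s => s.tp = π), w s

/-- v_j = Σ_k q_{jk} w_k. -/
def Frame.vVal (F : Frame σ) (w : StarType σ → ℕ) (μ : MsgType σ) : ℕ :=
  ∑ s ∈ F.stars, s.v μ * w s

/-- x_{ii'} = Σ_k o_{ik} p_{i'k} w_k. -/
def Frame.xVal (F : Frame σ) (w : StarType σ → ℕ) (π π' : OneType σ) : ℕ :=
  ∑ s ∈ F.stars.filter (fun s => s.tp = π ∧ PZero s π'), w s

/-- w is a Z-solution of F (conditions C1–C6, over positive integers). -/
def IsZSolution (F : Frame σ) (Z : ℕ) (w : StarType σ → ℕ) : Prop :=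
  (∀ s ∈ F.stars, 0 < w s) ∧
  (∀ μ μ' : MsgType σ, IsInvertible σ μ.1 → μ'.1 = μ.1.inv → F.vVal w μ = F.vVal w μ') ∧
  (∀ π : OneType σ, ∀ s ∈ F.stars, SCoeff s π ≤ F.uVal w π) ∧
  (∀ π : OneType σ, F.uVal w π ≤ 1 ∨ Z < F.uVal w π) ∧
  (∀ π π' : OneType σ, ∀ s ∈ F.stars, s.tp = π →
     (1 < F.uVal w π ∨ RCoeff s π' ≤ F.xVal w π' π)) ∧
  (∀ π π' : OneType σ, Sym2.mk π π' ∉ F.I → F.uVal w π ≤ 1 ∨ F.uVal w π' ≤ 1) ∧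
  (∀ π π' : OneType σ, ∀ s ∈ F.stars, Sym2.mk π π' ∉ F.I → s.tp = π →
     (1 < F.uVal w π ∨ F.xVal w π' π ≤ RCoeff s π'))

/-- u_i over ℕ* = ℕ ∪ {ℵ₀}. -/
def Frame.uValE (F : Frame σ) (w : StarType σ → ℕ∞) (π : OneType σ) : ℕ∞ :=
  ∑ s ∈ F.stars.filter (fun s => s.tp = π), w s

/-- v_j over ℕ*. -/
def Frame.vValE (F : Frame σ) (w : StarType σ → ℕ∞) (μ : MsgType σ) : ℕ∞ :=
  ∑ s ∈ F.stars, (s.v μ : ℕ∞) * w s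

/-- x_{ii'} over ℕ*. -/
def Frame.xValE (F : Frame σ) (w : StarType σ → ℕ∞) (π π' : OneType σ) : ℕ∞ :=
  ∑ s ∈ F.stars.filter (fun s => s.tp = π ∧ PZero s π'), w s

/-- w is an extended Z-solution of F: a Z-solution over ℕ* = ℕ ∪ {ℵ₀}
(with nonzero components). -/
def IsExtZSolution (F : Frame σ) (Z : ℕ) (w : StarType σ → ℕ∞) : Prop :=
  (∀ s ∈ F.stars, w s ≠ 0) ∧
  (∀ μ μ' : MsgType σ, IsInvertible σ μ.1 → μ'.1 = μ.1.inv → F.vValE w μ = F.vValE w μ') ∧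
  (∀ π : OneType σ, ∀ s ∈ F.stars, (SCoeff s π : ℕ∞) ≤ F.uValE w π) ∧
  (∀ π : OneType σ, F.uValE w π ≤ 1 ∨ (Z : ℕ∞) < F.uValE w π) ∧
  (∀ π π' : OneType σ, ∀ s ∈ F.stars, s.tp = π →
     (1 < F.uValE w π ∨ (RCoeff s π' : ℕ∞) ≤ F.xValE w π' π)) ∧
  (∀ π π' : OneType σ, Sym2.mk π π' ∉ F.I → F.uValE w π ≤ 1 ∨ F.uValE w π' ≤ 1) ∧
  (∀ π π' : OneType σ, ∀ s ∈ F.stars, Sym2.mk π π' ∉ F.I → s.tp = π →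
     (1 < F.uValE w π ∨ F.xValE w π' π ≤ (RCoeff s π' : ℕ∞)))

/-- The data of a normal-form sentence φ*: a quantifier-free equality-free α(x)
(given semantically by the set of 1-types entailing it), a quantifier-free
equality-free β(x,y) (given by the set of 2-types entailing it), and positive
counts C_h for the counting predicates. -/
structure NormalForm (σ : CSig) where
  alpha : OneType σ → Prop
  beta : TwoType σ → Prop
  C : σ.B → ℕ
  hC : ∀ f ∈ σ.counting, 0 < C f

/-- S ⊨ φ*. -/
def SatNF (N : NormalForm σ) (S : Struc σ A) : Prop :=
  (∀ a : A, N.alpha (S.tp1 a)) ∧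
  (∀ a b : A, a ≠ b → N.beta (S.tp2 a b)) ∧
  (∀ f ∈ σ.counting, ∀ a : A,
     {b : A | b ≠ a ∧ S.binary f a b = true}.encard = (N.C f : ℕ∞))

/-- F ⊨ φ*. -/
def FrameSatNF (N : NormalForm σ) (F : Frame σ) : Prop :=
  (∀ s ∈ F.stars, N.alpha s.tp) ∧
  (∀ s ∈ F.stars, ∀ μ : MsgType σ, 0 < s.v μ → N.beta μ.1 ∧ N.beta μ.1.inv) ∧
  (∀ p ∈ F.I, N.beta (F.θ p) ∧ N.beta ((F.θ p).inv)) ∧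
  (∀ s ∈ F.stars, ∀ f ∈ σ.counting,
     (∑ μ ∈ Finset.univ.filter (fun μ : MsgType σ => μ.1.rxy f = true), s.v μ) = N.C f)

/-- The signature obtained from σ by adding k new unary predicates; the counting
predicates are unchanged. -/
def addUnary (σ : CSig) (k : ℕ) : CSig where
  U := σ.U ⊕ Fin k
  B := σ.B
  counting := σ.counting

/-- S' (interpreting σ with k extra unary predicates) is an expansion of S:
it agrees with S on all predicates of σ. -/
def IsExpansion {σ : CSig} {k : ℕ} {A : Type} (S' : Struc (addUnary σ k) A)
    (S : Struc σ A) : Prop :=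
  (∀ (p : σ.U) (a : A), S'.unary (Sum.inl p) a = S.unary p a) ∧
  (∀ (f : σ.B) (a b : A), S'.binary f a b = S.binary f a b)

/- ===== Auxiliary development for patch_unification ===== -/

namespace PU

attribute [local instance] Classical.propDecidable

variable {σ : CSig} {A : Type}

/-- Two-type extensionality. -/
theorem tt_ext {τ τ' : TwoType σ} (h1 : τ.ux = τ'.ux) (h2 : τ.uy = τ'.uy)
    (h3 : τ.dx = τ'.dx) (h4 : τ.dy = τ'.dy) (h5 : τ.rxy = τ'.rxy) (h6 : τ.ryx = τ'.ryx) :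
    τ = τ' := by
  cases τ; cases τ'; subst h1 h2 h3 h4 h5 h6; rfl

theorem tp2_swap (S : Struc σ A) (a b : A) : (S.tp2 a b).inv = S.tp2 b a := rfl

theorem inv_inv (τ : TwoType σ) : τ.inv.inv = τ := rfl

theorem msg_tp2_iff (S : Struc σ A) (a b : A) :
    IsMessage σ (S.tp2 a b) ↔ ∃ f ∈ σ.counting, S.binary f a b = true := Iff.rfl

theorem not_msg_inv_of {τ : TwoType σ} (h1 : IsMessage σ τ) (h2 : ¬ IsInvertible σ τ) :
    ¬ IsMessage σ τ.inv := fun h => h2 ⟨h1, h⟩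

theorem tp1_u {S : Struc σ A} {x : A} {π' : OneType σ} (h : S.tp1 x = π') :
    (fun p => S.unary p x) = π'.u := congrArg OneType.u h

theorem tp1_d {S : Struc σ A} {x : A} {π' : OneType σ} (h : S.tp1 x = π') :
    (fun f => S.binary f x x) = π'.d := congrArg OneType.d h

/-- The non-invertible message partners of `a` among elements of 1-type π. -/
def NInvSet (S : Struc σ A) (π : OneType σ) (a : A) : Set A :=
  {c | c ≠ a ∧ S.tp1 c = π ∧ IsMessage σ (S.tp2 a c) ∧ ¬ IsInvertible σ (S.tp2 a c)}

/-- The slots of `a`: π-elements whose 2-type with a may be freely reassigned. -/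
def SlotSet (S : Struc σ A) (π : OneType σ) (Bs : Set A) (a : A) : Set A :=
  {c | c ≠ a ∧ S.tp1 c = π ∧
    ((c ∉ Bs ∧ ¬ IsMessage σ (S.tp2 c a)) ∨
     (c ∈ Bs ∧ IsMessage σ (S.tp2 a c) ∧ ¬ IsInvertible σ (S.tp2 a c)))}

theorem NInv_subset_Slot (S : Struc σ A) (π : OneType σ) (Bs : Set A) (a : A) :
    NInvSet S π a ⊆ SlotSet S π Bs a := by
  rintro c ⟨hne, htp, hmsg, hninv⟩
  refine ⟨hne, htp, ?_⟩
  by_cases hc : c ∈ Bs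
  · exact Or.inr ⟨hc, hmsg, hninv⟩
  · exact Or.inl ⟨hc, by rw [← tp2_swap]; exact not_msg_inv_of hmsg hninv⟩

theorem slot_not_self (S : Struc σ A) (π : OneType σ) (Bs : Set A) (a : A) :
    a ∉ SlotSet S π Bs a := fun h => h.1 rfl

theorem slot_not_inv {S : Struc σ A} {π : OneType σ} {Bs : Set A} {a c : A}
    (hc : c ∈ SlotSet S π Bs a) : ¬ IsInvertible σ (S.tp2 a c) := by
  rcases hc.2.2 with ⟨_, h⟩ | ⟨_, _, h⟩
  · intro hi; exact h hi.2
  · exact h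

theorem slot_back_not_msg {S : Struc σ A} {π : OneType σ} {Bs : Set A} {a c : A}
    (hc : c ∈ SlotSet S π Bs a) : ¬ IsMessage σ (S.tp2 c a) := by
  rcases hc.2.2 with ⟨_, h⟩ | ⟨_, hm, hni⟩
  · exact h
  · rw [← tp2_swap]; exact not_msg_inv_of hm hni

theorem slot_exclusive {S : Struc σ A} {π : OneType σ} {Bs : Set A} {x y : A}
    (hx : x ∈ Bs) (hy : y ∈ SlotSet S π Bs x) : ¬ (y ∈ Bs ∧ x ∈ SlotSet S π Bs y) := by
  rintro ⟨hyB, hxs⟩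
  rcases hy.2.2 with ⟨hnB, _⟩ | ⟨_, hmsg, _⟩
  · exact hnB hyB
  · exact slot_back_not_msg hxs hmsg

section Mod

variable (S : Struc σ A) (π πB : OneType σ) (Bs : Set A) (a₀ : A) (φ : A → A → A)
  (fill : TwoType σ)

/-- The new 2-type assigned to the pair (x, c) when c is a slot of x ∈ B. -/
noncomputable def newTp (x c : A) : TwoType σ :=
  if h : ∃ d, d ∈ NInvSet S π a₀ ∧ φ x d = c then S.tp2 a₀ h.choose else fill

/-- The modified structure. -/
noncomputable def modStruc : Struc σ A where
  unary := S.unary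
  binary f x y :=
    if x ∈ Bs ∧ y ∈ SlotSet S π Bs x then (newTp S π a₀ φ fill x y).rxy f
    else if y ∈ Bs ∧ x ∈ SlotSet S π Bs y then (newTp S π a₀ φ fill y x).ryx f
    else S.binary f x y

/-- The 2-type `τ` is suitable as a new type from πB to π. -/
def GoodFor (τ : TwoType σ) : Prop :=
  τ.ux = πB.u ∧ τ.dx = πB.d ∧ τ.uy = π.u ∧ τ.dy = π.d ∧
  ¬ IsMessage σ τ.inv ∧ ¬ IsInvertible σ τ ∧ ∃ u v : A, u ≠ v ∧ S.tp2 u v = τ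

/-- Some slot of some element of B is left unassigned. -/
def LeftOver : Prop :=
  ∃ a ∈ Bs, ∃ c ∈ SlotSet S π Bs a, ¬ ∃ d, d ∈ NInvSet S π a₀ ∧ φ a d = c

variable {S π πB Bs a₀ φ fill}

theorem mod_binary_base {x y : A} (h1 : ¬ (x ∈ Bs ∧ y ∈ SlotSet S π Bs x))
    (h2 : ¬ (y ∈ Bs ∧ x ∈ SlotSet S π Bs y)) (f : σ.B) :
    (modStruc S π Bs a₀ φ fill).binary f x y = S.binary f x y := by
  show (if _ then _ else if _ then _ else _) = _
  rw [if_neg h1, if_neg h2]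

theorem mod_binary_diag (x : A) (f : σ.B) :
    (modStruc S π Bs a₀ φ fill).binary f x x = S.binary f x x :=
  mod_binary_base (fun h => slot_not_self S π Bs x h.2) (fun h => slot_not_self S π Bs x h.2) f

theorem mod_binary_owner {x y : A} (hx : x ∈ Bs) (hy : y ∈ SlotSet S π Bs x) (f : σ.B) :
    (modStruc S π Bs a₀ φ fill).binary f x y = (newTp S π a₀ φ fill x y).rxy f := by
  show (if _ then _ else if _ then _ else _) = _
  rw [if_pos ⟨hx, hy⟩]

theorem mod_binary_owner' {x y : A} (hx : x ∈ Bs) (hy : y ∈ SlotSet S π Bs x) (f : σ.B) :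
    (modStruc S π Bs a₀ φ fill).binary f y x = (newTp S π a₀ φ fill x y).ryx f := by
  show (if _ then _ else if _ then _ else _) = _
  rw [if_neg (fun h => slot_exclusive hx hy h), if_pos ⟨hx, hy⟩]

theorem mod_tp1 (x : A) : (modStruc S π Bs a₀ φ fill).tp1 x = S.tp1 x := by
  show OneType.mk _ _ = OneType.mk _ _
  rw [OneType.mk.injEq]
  exact ⟨rfl, funext fun f => mod_binary_diag x f⟩

theorem newTp_good (hB1 : ∀ a ∈ Bs, S.tp1 a = πB) (ha₀B : a₀ ∈ Bs)
    (hfill : LeftOver S π Bs a₀ φ → GoodFor S π πB fill)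
    {x y : A} (hx : x ∈ Bs) (hy : y ∈ SlotSet S π Bs x) :
    GoodFor S π πB (newTp S π a₀ φ fill x y) := by
  unfold newTp
  split_ifs with h
  · obtain ⟨hdD, -⟩ := h.choose_spec
    obtain ⟨hne, htp, hmsg, hninv⟩ := hdD
    exact ⟨tp1_u (hB1 a₀ ha₀B), tp1_d (hB1 a₀ ha₀B), tp1_u htp,
      tp1_d htp, not_msg_inv_of hmsg hninv, hninv, a₀, h.choose, Ne.symm hne, rfl⟩
  · exact hfill ⟨x, hx, y, hy, h⟩

theorem mod_tp2_owner (hB1 : ∀ a ∈ Bs, S.tp1 a = πB) (ha₀B : a₀ ∈ Bs)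
    (hfill : LeftOver S π Bs a₀ φ → GoodFor S π πB fill)
    {x y : A} (hx : x ∈ Bs) (hy : y ∈ SlotSet S π Bs x) :
    (modStruc S π Bs a₀ φ fill).tp2 x y = newTp S π a₀ φ fill x y ∧
    (modStruc S π Bs a₀ φ fill).tp2 y x = (newTp S π a₀ φ fill x y).inv := by
  have hg := newTp_good hB1 ha₀B hfill hx hy
  obtain ⟨g1, g2, g3, g4, -, -, -⟩ := hg
  have hux : (fun p => S.unary p x) = (newTp S π a₀ φ fill x y).ux :=
    (tp1_u (hB1 x hx)).trans g1.symm
  have huy : (fun p => S.unary p y) = (newTp S π a₀ φ fill x y).uy :=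
    (tp1_u hy.2.1).trans g3.symm
  have hdx : (fun f => S.binary f x x) = (newTp S π a₀ φ fill x y).dx :=
    (tp1_d (hB1 x hx)).trans g2.symm
  have hdy : (fun f => S.binary f y y) = (newTp S π a₀ φ fill x y).dy :=
    (tp1_d hy.2.1).trans g4.symm
  constructor
  · refine tt_ext ?_ ?_ ?_ ?_ ?_ ?_
    · exact hux
    · exact huy
    · exact (funext fun f => mod_binary_diag x f).trans hdx
    · exact (funext fun f => mod_binary_diag y f).trans hdy
    · exact funext fun f => mod_binary_owner hx hy f
    · exact funext fun f => mod_binary_owner' hx hy f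
  · refine tt_ext ?_ ?_ ?_ ?_ ?_ ?_
    · exact huy
    · exact hux
    · exact (funext fun f => mod_binary_diag y f).trans hdy
    · exact (funext fun f => mod_binary_diag x f).trans hdx
    · exact funext fun f => mod_binary_owner' hx hy f
    · exact funext fun f => mod_binary_owner hx hy f

theorem mod_tp2_base {x y : A} (h1 : ¬ (x ∈ Bs ∧ y ∈ SlotSet S π Bs x))
    (h2 : ¬ (y ∈ Bs ∧ x ∈ SlotSet S π Bs y)) :
    (modStruc S π Bs a₀ φ fill).tp2 x y = S.tp2 x y := by
  refine tt_ext rfl rfl ?_ ?_ ?_ ?_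
  · exact funext fun f => mod_binary_diag x f
  · exact funext fun f => mod_binary_diag y f
  · exact funext fun f => mod_binary_base h1 h2 f
  · exact funext fun f => mod_binary_base h2 h1 f

theorem slot_newTp_filter
    (hφ : Set.MapsTo (φ x) (NInvSet S π a₀) (SlotSet S π Bs x) ∧
          Set.InjOn (φ x) (NInvSet S π a₀))
    (hfillmsg : LeftOver S π Bs a₀ φ → ¬ IsMessage σ fill) (hx : x ∈ Bs)
    (Q : TwoType σ → Prop) (hQ : ∀ τ, Q τ → IsMessage σ τ) :
    {c | c ∈ SlotSet S π Bs x ∧ Q (newTp S π a₀ φ fill x c)} =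
      φ x '' {d | d ∈ NInvSet S π a₀ ∧ Q (S.tp2 a₀ d)} := by
  ext c
  constructor
  · rintro ⟨hc, hQc⟩
    unfold newTp at hQc
    split_ifs at hQc with h
    · exact ⟨h.choose, ⟨h.choose_spec.1, hQc⟩, h.choose_spec.2⟩
    · exact absurd (hQ _ hQc) (hfillmsg ⟨x, hx, c, hc, h⟩)
  · rintro ⟨d, ⟨hd, hQd⟩, rfl⟩
    refine ⟨hφ.1 hd, ?_⟩
    unfold newTp
    have hex : ∃ d', d' ∈ NInvSet S π a₀ ∧ φ x d' = φ x d := ⟨d, hd, rfl⟩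
    rw [dif_pos hex]
    have hch : hex.choose = d := hφ.2 hex.choose_spec.1 hd hex.choose_spec.2
    rw [hch]; exact hQd

theorem slot_newTp_filter_encard
    (hφ : Set.MapsTo (φ x) (NInvSet S π a₀) (SlotSet S π Bs x) ∧
          Set.InjOn (φ x) (NInvSet S π a₀))
    (hfillmsg : LeftOver S π Bs a₀ φ → ¬ IsMessage σ fill) (hx : x ∈ Bs)
    (Q : TwoType σ → Prop) (hQ : ∀ τ, Q τ → IsMessage σ τ) :
    {c | c ∈ SlotSet S π Bs x ∧ Q (newTp S π a₀ φ fill x c)}.encard =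
      {d | d ∈ NInvSet S π a₀ ∧ Q (S.tp2 a₀ d)}.encard := by
  rw [slot_newTp_filter hφ hfillmsg hx Q hQ]
  exact Set.InjOn.encard_image (hφ.2.mono fun d hd => hd.1)

end Mod

/- ===== encard helpers ===== -/

theorem encard_biUnion_le {ι : Type*} (t : Finset ι) (s : ι → Set A) :
    (⋃ i ∈ t, s i).encard ≤ ∑ i ∈ t, (s i).encard := by
  classical
  induction t using Finset.induction with
  | empty => simp
  | insert _ _ hnotmem ih =>
    rename_i a t
    rw [Finset.set_biUnion_insert, Finset.sum_insert hnotmem]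
    exact (Set.encard_union_le _ _).trans (add_le_add le_rfl ih)

theorem encard_biUnion_eq {ι : Type*} (t : Finset ι) (s : ι → Set A)
    (h : ∀ i ∈ t, ∀ j ∈ t, i ≠ j → Disjoint (s i) (s j)) :
    (⋃ i ∈ t, s i).encard = ∑ i ∈ t, (s i).encard := by
  classical
  induction t using Finset.induction with
  | empty => simp
  | insert _ _ hnotmem ih =>
    rename_i a t
    rw [Finset.set_biUnion_insert, Finset.sum_insert hnotmem,
      Set.encard_union_eq, ih (fun i hi j hj hij => h i (Finset.mem_insert_of_mem hi) j
        (Finset.mem_insert_of_mem hj) hij)]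
    rw [Set.disjoint_iUnion_right]
    intro i
    rw [Set.disjoint_iUnion_right]
    intro hi
    exact h a (Finset.mem_insert_self a t) i (Finset.mem_insert_of_mem hi)
      (fun he => hnotmem (he ▸ hi))

/- ===== counting / mass lemmas ===== -/

def Pset (S : Struc σ A) (π : OneType σ) (a : A) (μ : MsgType σ) : Set A :=
  {b | b ≠ a ∧ S.tp1 b ∈ ({π} : Set (OneType σ)) ∧ S.tp2 a b = μ.1}

def Iset (S : Struc σ A) (π : OneType σ) (f : σ.B) (a : A) : Set A :=
  {b | b ≠ a ∧ S.tp1 b ∈ ({π} : Set (OneType σ)) ∧ S.binary f a b = true ∧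
    IsInvertible σ (S.tp2 a b)}

def Eset (S : Struc σ A) (π : OneType σ) (f : σ.B) (a : A) : Set A :=
  {b | b ≠ a ∧ S.tp1 b ∈ ({π} : Set (OneType σ)) ∧ S.binary f a b = true ∧
    ¬ IsInvertible σ (S.tp2 a b)}

def Cset (S : Struc σ A) (π : OneType σ) (f : σ.B) (a : A) : Set A :=
  {b | b ≠ a ∧ S.tp1 b ∈ ({π} : Set (OneType σ)) ∧ S.binary f a b = true}

theorem Pset_encard (S : Struc σ A) (π : OneType σ) (a : A) (μ : MsgType σ) :
    (Pset S π a μ).encard = S.pr {π} a μ := rfl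

theorem Cset_encard (S : Struc σ A) (π : OneType σ) {f : σ.B} (hf : f ∈ σ.counting) (a : A) :
    (Cset S π f a).encard = S.ct {π} a ⟨f, hf⟩ := rfl

theorem Iset_finite {S : Struc σ A} {π : OneType σ} {Y : ℕ} (hbr : S.Branching Y)
    {f : σ.B} (hf : f ∈ σ.counting) (a : A) : (Iset S π f a).encard ≠ ⊤ := by
  have hsub : Iset S π f a ⊆ {b : A | b ≠ a ∧ S.binary f a b = true} :=
    fun b hb => ⟨hb.1, hb.2.2.1⟩
  exact (((Set.encard_mono hsub).trans (hbr a f hf)).trans_lt (WithTop.coe_lt_top Y)).ne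

theorem Iset_encard_eq {S : Struc σ A} {π : OneType σ} {Bs : Set A}
    (hB : PiPatch S π Bs) {f : σ.B} (hf : f ∈ σ.counting) {x a₀ : A}
    (hx : x ∈ Bs) (ha₀B : a₀ ∈ Bs) :
    (Iset S π f x).encard = (Iset S π f a₀).encard := by
  classical
  set tf : Finset (MsgType σ) :=
    Finset.univ.filter (fun μ : MsgType σ => IsInvertible σ μ.1 ∧ μ.1.rxy f = true) with htf
  have hrep : ∀ a : A, Iset S π f a = ⋃ μ ∈ tf, Pset S π a μ := by
    intro a
    ext b
    constructor
    · rintro ⟨hne, htp, hbin, hinv⟩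
      have hmsg : IsMessage σ (S.tp2 a b) := ⟨f, hf, hbin⟩
      refine Set.mem_iUnion₂.mpr ⟨⟨S.tp2 a b, hmsg⟩, ?_, hne, htp, rfl⟩
      exact Finset.mem_filter.mpr ⟨Finset.mem_univ _, hinv, hbin⟩
    · intro hb
      rw [Set.mem_iUnion₂] at hb
      obtain ⟨μ, hμ, hne, htp, heq⟩ := hb
      rw [htf, Finset.mem_filter] at hμ
      refine ⟨hne, htp, ?_, heq ▸ hμ.2.1⟩
      show (S.tp2 a b).rxy f = true
      rw [heq]; exact hμ.2.2
  have hdisj : ∀ a : A, ∀ μ ∈ tf, ∀ ν ∈ tf, μ ≠ ν → Disjoint (Pset S π a μ) (Pset S π a ν) := by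
    intro a μ _ ν _ hμν
    rw [Set.disjoint_left]
    rintro b ⟨-, -, h1⟩ ⟨-, -, h2⟩
    exact hμν (Subtype.ext (h1 ▸ h2))
  rw [hrep x, hrep a₀, encard_biUnion_eq tf _ (hdisj x), encard_biUnion_eq tf _ (hdisj a₀)]
  refine Finset.sum_congr rfl fun μ hμ => ?_
  rw [htf, Finset.mem_filter] at hμ
  rw [Pset_encard, Pset_encard]
  exact hB.2 x hx a₀ ha₀B μ hμ.2.1

theorem Cset_decomp (S : Struc σ A) (π : OneType σ) (f : σ.B) (a : A) :
    Cset S π f a = Iset S π f a ∪ Eset S π f a := by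
  ext b
  by_cases h : IsInvertible σ (S.tp2 a b)
  · constructor
    · rintro ⟨h1, h2, h3⟩; exact Or.inl ⟨h1, h2, h3, h⟩
    · rintro (⟨h1, h2, h3, -⟩ | ⟨h1, h2, h3, -⟩) <;> exact ⟨h1, h2, h3⟩
  · constructor
    · rintro ⟨h1, h2, h3⟩; exact Or.inr ⟨h1, h2, h3, h⟩
    · rintro (⟨h1, h2, h3, -⟩ | ⟨h1, h2, h3, -⟩) <;> exact ⟨h1, h2, h3⟩

theorem IE_disjoint (S : Struc σ A) (π : OneType σ) (f : σ.B) (a : A) :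
    Disjoint (Iset S π f a) (Eset S π f a) := by
  rw [Set.disjoint_left]
  rintro b ⟨-, -, -, h1⟩ ⟨-, -, -, h2⟩
  exact h2 h1

theorem Eset_encard_eq {S : Struc σ A} {π : OneType σ} {Bs : Set A} {Y : ℕ}
    (hB : PiPatch S π Bs) (hbr : S.Branching Y) {f : σ.B} (hf : f ∈ σ.counting)
    {x a₀ : A} (hx : x ∈ Bs) (ha₀B : a₀ ∈ Bs) :
    (Eset S π f x).encard = (Eset S π f a₀).encard := by
  have hct : S.ct {π} x = S.ct {π} a₀ := (hB.1 x hx a₀ ha₀B).2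
  have h1 : (Cset S π f x).encard = (Cset S π f a₀).encard := by
    rw [Cset_encard S π hf, Cset_encard S π hf, hct]
  rw [Cset_decomp, Cset_decomp, Set.encard_union_eq (IE_disjoint S π f x),
    Set.encard_union_eq (IE_disjoint S π f a₀), Iset_encard_eq hB hf hx ha₀B] at h1
  exact WithTop.add_left_cancel (Iset_finite hbr hf a₀) h1

/- ===== pigeonhole: existence of a silent pair ===== -/

theorem exists_silent (S : Struc σ A) (m Y : ℕ) (hm : σ.counting.card = m)
    (hbr : S.Branching Y) (πB π : OneType σ)
    (hU : (((m * Y + 1) ^ 2 : ℕ) : ℕ∞) < {a | S.tp1 a = πB}.encard)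
    (hV : (((m * Y + 1) ^ 2 : ℕ) : ℕ∞) < {a | S.tp1 a = π}.encard) :
    ∃ u v : A, u ≠ v ∧ S.tp1 u = πB ∧ S.tp1 v = π ∧
      ¬ IsMessage σ (S.tp2 u v) ∧ ¬ IsMessage σ (S.tp2 v u) := by
  classical
  by_contra hcon
  push_neg at hcon
  set K := m * Y with hK
  set Z := (K + 1) ^ 2 with hZ
  -- extract finite subsets of size Z+1
  have hcast : ∀ s : Set A, (((m * Y + 1) ^ 2 : ℕ) : ℕ∞) < s.encard →
      (((Z + 1 : ℕ)) : ℕ∞) ≤ s.encard := by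
    intro s hs
    have : ((Z : ℕ) : ℕ∞) < s.encard := by exact_mod_cast hs
    exact_mod_cast Order.add_one_le_of_lt this
  obtain ⟨U, hUsub, hUcard⟩ := Set.exists_subset_encard_eq (hcast _ hU)
  obtain ⟨V, hVsub, hVcard⟩ := Set.exists_subset_encard_eq (hcast _ hV)
  have hUfin : U.Finite := Set.finite_of_encard_eq_coe hUcard
  have hVfin : V.Finite := Set.finite_of_encard_eq_coe hVcard
  set FU := hUfin.toFinset with hFUdef
  set FV := hVfin.toFinset with hFVdef
  have hFU : FU.card = Z + 1 := by
    have := hUfin.encard_eq_coe_toFinset_card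
    rw [hUcard] at this
    exact_mod_cast this.symm
  have hFV : FV.card = Z + 1 := by
    have := hVfin.encard_eq_coe_toFinset_card
    rw [hVcard] at this
    exact_mod_cast this.symm
  -- out-degree bound
  have houtset : ∀ u : A, {v : A | v ≠ u ∧ ∃ f ∈ σ.counting, S.binary f u v = true}.encard
      ≤ (K : ℕ∞) := by
    intro u
    have hsub : {v : A | v ≠ u ∧ ∃ f ∈ σ.counting, S.binary f u v = true} ⊆
        ⋃ f ∈ σ.counting, {v : A | v ≠ u ∧ S.binary f u v = true} := by
      rintro v ⟨hne, f, hf, hb⟩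
      exact Set.mem_iUnion₂.mpr ⟨f, hf, hne, hb⟩
    refine (Set.encard_mono hsub).trans ((encard_biUnion_le _ _).trans ?_)
    have h1 : ∀ f ∈ σ.counting, {v : A | v ≠ u ∧ S.binary f u v = true}.encard ≤ (Y : ℕ∞) :=
      fun f hf => hbr u f hf
    refine (Finset.sum_le_sum h1).trans ?_
    rw [Finset.sum_const, hm, nsmul_eq_mul, hK]
    exact_mod_cast le_refl _
  have hout : ∀ (u : A) (F : Finset A),
      (∀ v ∈ F, v ≠ u ∧ ∃ f ∈ σ.counting, S.binary f u v = true) →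
      F.card ≤ K := by
    intro u F hp
    have hsub : ↑F ⊆ {v : A | v ≠ u ∧ ∃ f ∈ σ.counting, S.binary f u v = true} :=
      fun v hv => hp v hv
    have := (Set.encard_mono hsub).trans (houtset u)
    rwa [Set.encard_coe_eq_coe_finsetCard, Nat.cast_le] at this
  -- the relation: v gets no message from u
  set P : A → A → Prop := fun u v => v ≠ u ∧ ¬ ∃ f ∈ σ.counting, S.binary f u v = true
    with hPdef
  -- lower bound per u ∈ FU
  have key1 : ∀ u ∈ FU, Z + 1 ≤ (FV.filter (P u)).card + (1 + K) := by
    intro u _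
    have hsub : FV ⊆ (FV.filter (P u)) ∪ ((FV.filter (fun v => v = u)) ∪
        (FV.filter (fun v => v ≠ u ∧ ∃ f ∈ σ.counting, S.binary f u v = true))) := by
      intro v hv
      by_cases hvu : v = u
      · exact Finset.mem_union_right _ (Finset.mem_union_left _
          (Finset.mem_filter.mpr ⟨hv, hvu⟩))
      by_cases hmsg : ∃ f ∈ σ.counting, S.binary f u v = true
      · exact Finset.mem_union_right _ (Finset.mem_union_right _
          (Finset.mem_filter.mpr ⟨hv, hvu, hmsg⟩))
      · exact Finset.mem_union_left _ (Finset.mem_filter.mpr ⟨hv, hvu, hmsg⟩)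
    have c1 : (FV.filter (fun v => v = u)).card ≤ 1 := by
      refine Finset.card_le_one.mpr ?_
      intro a ha b hb
      rw [Finset.mem_filter] at ha hb
      rw [ha.2, hb.2]
    have c2 : (FV.filter (fun v => v ≠ u ∧ ∃ f ∈ σ.counting, S.binary f u v = true)).card
        ≤ K := by
      refine hout u _ ?_
      intro v hv
      exact (Finset.mem_filter.mp hv).2
    have := (Finset.card_le_card hsub).trans ((Finset.card_union_le _ _).trans
      (Nat.add_le_add_left (Finset.card_union_le _ _) _))
    omega
  -- column bound per v ∈ FV
  have key3 : ∀ v ∈ FV, (FU.filter (fun u => P u v)).card ≤ K := by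
    intro v hvF
    have hvV : v ∈ V := by rw [hFVdef, Set.Finite.mem_toFinset] at hvF; exact hvF
    refine hout v _ ?_
    intro u hu
    rw [Finset.mem_filter] at hu
    obtain ⟨huF, hvu, hnomsg⟩ := hu
    have huU : u ∈ U := by rw [hFUdef, Set.Finite.mem_toFinset] at huF; exact huF
    have huv : u ≠ v := Ne.symm hvu
    have hmsg := hcon u v huv (hUsub huU) (hVsub hvV) hnomsg
    exact ⟨huv, hmsg⟩
  -- double counting
  have hexch : ∑ u ∈ FU, (FV.filter (P u)).card = ∑ v ∈ FV, (FU.filter (fun u => P u v)).card := by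
    simp only [Finset.card_filter]
    exact Finset.sum_comm
  have hup : ∑ u ∈ FU, (FV.filter (P u)).card ≤ (Z + 1) * K := by
    rw [hexch]
    calc ∑ v ∈ FV, (FU.filter (fun u => P u v)).card ≤ ∑ _v ∈ FV, K :=
          Finset.sum_le_sum key3
      _ = (Z + 1) * K := by rw [Finset.sum_const, hFV, smul_eq_mul]
  have hlow : (Z + 1) * (Z + 1) ≤ (∑ u ∈ FU, (FV.filter (P u)).card) + (Z + 1) * (1 + K) := by
    calc (Z + 1) * (Z + 1) = ∑ _u ∈ FU, (Z + 1) := by rw [Finset.sum_const, hFU, smul_eq_mul]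
      _ ≤ ∑ u ∈ FU, ((FV.filter (P u)).card + (1 + K)) := Finset.sum_le_sum key1
      _ = (∑ u ∈ FU, (FV.filter (P u)).card) + (Z + 1) * (1 + K) := by
          rw [Finset.sum_add_distrib, Finset.sum_const, hFU, smul_eq_mul]
  have hfin : (Z + 1) * (Z + 1) ≤ (Z + 1) * K + (Z + 1) * (1 + K) := le_trans hlow (by omega)
  have hZ1 : Z + 1 ≤ K + (1 + K) := by
    have hpos : 0 < Z + 1 := Nat.succ_pos _
    nlinarith
  rw [hZ] at hZ1
  nlinarith

/- ===== obligations for the modified structure ===== -/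

section Obl

variable {S : Struc σ A} {π πB : OneType σ} {Bs : Set A} {a₀ : A} {φ : A → A → A}
  {fill : TwoType σ}

theorem mod_pr_compl (hB1 : ∀ a ∈ Bs, S.tp1 a = πB) (ha₀B : a₀ ∈ Bs)
    (hfill : LeftOver S π Bs a₀ φ → GoodFor S π πB fill) (x : A) :
    (modStruc S π Bs a₀ φ fill).pr {π}ᶜ x = S.pr {π}ᶜ x := by
  funext μ
  simp only [Struc.pr]
  congr 1
  ext c
  simp only [Set.mem_setOf_eq, mod_tp1, Set.mem_compl_iff, Set.mem_singleton_iff]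
  refine and_congr_right fun hne => and_congr_right fun htp => ?_
  by_cases h1 : x ∈ Bs ∧ c ∈ SlotSet S π Bs x
  · exact absurd h1.2.2.1 htp
  by_cases h2 : c ∈ Bs ∧ x ∈ SlotSet S π Bs c
  · have hn1 : ¬ IsMessage σ ((modStruc S π Bs a₀ φ fill).tp2 x c) := by
      rw [(mod_tp2_owner hB1 ha₀B hfill h2.1 h2.2).2]
      exact (newTp_good hB1 ha₀B hfill h2.1 h2.2).2.2.2.2.1
    have hn2 := slot_back_not_msg h2.2
    constructor
    · intro he; exact absurd (he.symm ▸ μ.2) hn1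
    · intro he; exact absurd (he.symm ▸ μ.2) hn2
  · rw [mod_tp2_base h1 h2]

theorem mod_pr_univ (hB1 : ∀ a ∈ Bs, S.tp1 a = πB) (ha₀B : a₀ ∈ Bs)
    (hfill : LeftOver S π Bs a₀ φ → GoodFor S π πB fill) {x : A} (hx : x ∉ Bs) :
    (modStruc S π Bs a₀ φ fill).pr Set.univ x = S.pr Set.univ x := by
  funext μ
  simp only [Struc.pr]
  congr 1
  ext c
  simp only [Set.mem_setOf_eq, Set.mem_univ, true_and]
  refine and_congr_right fun hne => ?_
  by_cases h1 : x ∈ Bs ∧ c ∈ SlotSet S π Bs x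
  · exact absurd h1.1 hx
  by_cases h2 : c ∈ Bs ∧ x ∈ SlotSet S π Bs c
  · have hn1 : ¬ IsMessage σ ((modStruc S π Bs a₀ φ fill).tp2 x c) := by
      rw [(mod_tp2_owner hB1 ha₀B hfill h2.1 h2.2).2]
      exact (newTp_good hB1 ha₀B hfill h2.1 h2.2).2.2.2.2.1
    have hn2 := slot_back_not_msg h2.2
    constructor
    · intro he; exact absurd (he.symm ▸ μ.2) hn1
    · intro he; exact absurd (he.symm ▸ μ.2) hn2
  · rw [mod_tp2_base h1 h2]

theorem mod_pr_inv (hB1 : ∀ a ∈ Bs, S.tp1 a = πB) (ha₀B : a₀ ∈ Bs)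
    (hfill : LeftOver S π Bs a₀ φ → GoodFor S π πB fill) (x : A) (μ : MsgType σ)
    (hinv : IsInvertible σ μ.1) :
    (modStruc S π Bs a₀ φ fill).pr {π} x μ = S.pr {π} x μ := by
  simp only [Struc.pr]
  congr 1
  ext c
  simp only [Set.mem_setOf_eq, mod_tp1, Set.mem_singleton_iff]
  refine and_congr_right fun hne => and_congr_right fun htp => ?_
  by_cases h1 : x ∈ Bs ∧ c ∈ SlotSet S π Bs x
  · have hg := newTp_good hB1 ha₀B hfill h1.1 h1.2
    rw [(mod_tp2_owner hB1 ha₀B hfill h1.1 h1.2).1]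
    constructor
    · intro he; exact absurd (he.symm ▸ hinv) hg.2.2.2.2.2.1
    · intro he; exact absurd (he.symm ▸ hinv) (slot_not_inv h1.2)
  by_cases h2 : c ∈ Bs ∧ x ∈ SlotSet S π Bs c
  · have hn1 : ¬ IsMessage σ ((modStruc S π Bs a₀ φ fill).tp2 x c) := by
      rw [(mod_tp2_owner hB1 ha₀B hfill h2.1 h2.2).2]
      exact (newTp_good hB1 ha₀B hfill h2.1 h2.2).2.2.2.2.1
    have hn2 := slot_back_not_msg h2.2
    constructor
    · intro he; exact absurd (he.symm ▸ hinv.1) hn1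
    · intro he; exact absurd (he.symm ▸ hinv.1) hn2
  · rw [mod_tp2_base h1 h2]

theorem mod_pr_noninv (hB1 : ∀ a ∈ Bs, S.tp1 a = πB) (ha₀B : a₀ ∈ Bs)
    (hfill : LeftOver S π Bs a₀ φ → GoodFor S π πB fill)
    (hfillmsg : LeftOver S π Bs a₀ φ → ¬ IsMessage σ fill)
    (hφ : ∀ a ∈ Bs, Set.MapsTo (φ a) (NInvSet S π a₀) (SlotSet S π Bs a) ∧
      Set.InjOn (φ a) (NInvSet S π a₀))
    {x : A} (hx : x ∈ Bs) (μ : MsgType σ) (hninv : ¬ IsInvertible σ μ.1) :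
    (modStruc S π Bs a₀ φ fill).pr {π} x μ =
      {d | d ∈ NInvSet S π a₀ ∧ S.tp2 a₀ d = μ.1}.encard := by
  simp only [Struc.pr]
  have hset : {b | b ≠ x ∧ (modStruc S π Bs a₀ φ fill).tp1 b ∈ ({π} : Set (OneType σ)) ∧
      (modStruc S π Bs a₀ φ fill).tp2 x b = μ.1} =
      {c | c ∈ SlotSet S π Bs x ∧ newTp S π a₀ φ fill x c = μ.1} := by
    ext c
    simp only [Set.mem_setOf_eq, mod_tp1, Set.mem_singleton_iff]
    constructor
    · rintro ⟨hne, htp, heq⟩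
      by_cases h1 : c ∈ SlotSet S π Bs x
      · exact ⟨h1, by rw [← (mod_tp2_owner hB1 ha₀B hfill hx h1).1]; exact heq⟩
      by_cases h2 : c ∈ Bs ∧ x ∈ SlotSet S π Bs c
      · have hn1 : ¬ IsMessage σ ((modStruc S π Bs a₀ φ fill).tp2 x c) := by
          rw [(mod_tp2_owner hB1 ha₀B hfill h2.1 h2.2).2]
          exact (newTp_good hB1 ha₀B hfill h2.1 h2.2).2.2.2.2.1
        exact absurd (heq.symm ▸ μ.2) hn1
      · rw [mod_tp2_base (fun h => h1 h.2) h2] at heq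
        exact absurd (NInv_subset_Slot S π Bs x
          ⟨hne, htp, heq.symm ▸ μ.2, heq.symm ▸ hninv⟩) h1
    · rintro ⟨hc, heq⟩
      exact ⟨hc.1, hc.2.1, by rw [(mod_tp2_owner hB1 ha₀B hfill hx hc).1]; exact heq⟩
  rw [hset]
  exact slot_newTp_filter_encard (hφ x hx) hfillmsg hx (fun τ => τ = μ.1)
    (fun τ hτ => hτ.symm ▸ μ.2)

theorem mod_ct {Y : ℕ} (hB : PiPatch S π Bs) (hbr : S.Branching Y)
    (hB1 : ∀ a ∈ Bs, S.tp1 a = πB) (ha₀B : a₀ ∈ Bs)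
    (hfill : LeftOver S π Bs a₀ φ → GoodFor S π πB fill)
    (hfillmsg : LeftOver S π Bs a₀ φ → ¬ IsMessage σ fill)
    (hφ : ∀ a ∈ Bs, Set.MapsTo (φ a) (NInvSet S π a₀) (SlotSet S π Bs a) ∧
      Set.InjOn (φ a) (NInvSet S π a₀))
    {x : A} (hx : x ∈ Bs) :
    (modStruc S π Bs a₀ φ fill).ct {π} x = S.ct {π} x := by
  funext fp
  obtain ⟨f, hf⟩ := fp
  simp only [Struc.ct]
  have hset : {b | b ≠ x ∧ (modStruc S π Bs a₀ φ fill).tp1 b ∈ ({π} : Set (OneType σ)) ∧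
      (modStruc S π Bs a₀ φ fill).binary f x b = true} =
      Iset S π f x ∪ {c | c ∈ SlotSet S π Bs x ∧ (newTp S π a₀ φ fill x c).rxy f = true} := by
    ext c
    simp only [Set.mem_setOf_eq, mod_tp1, Set.mem_union, Iset, Set.mem_singleton_iff]
    by_cases h1 : c ∈ SlotSet S π Bs x
    · have hbin : (modStruc S π Bs a₀ φ fill).binary f x c =
          (newTp S π a₀ φ fill x c).rxy f := mod_binary_owner hx h1 f
      constructor
      · rintro ⟨hne, htp, hb⟩
        exact Or.inr ⟨h1, by rw [← hbin]; exact hb⟩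
      · rintro (⟨hne, htp, hb, hinv⟩ | ⟨hsl, hb⟩)
        · exact absurd hinv (slot_not_inv h1)
        · exact ⟨h1.1, h1.2.1, by rw [hbin]; exact hb⟩
    · by_cases h2 : c ∈ Bs ∧ x ∈ SlotSet S π Bs c
      · have hbin : (modStruc S π Bs a₀ φ fill).binary f x c =
            (newTp S π a₀ φ fill c x).ryx f := mod_binary_owner' h2.1 h2.2 f
        have hnm : ¬ IsMessage σ ((newTp S π a₀ φ fill c x).inv) :=
          (newTp_good hB1 ha₀B hfill h2.1 h2.2).2.2.2.2.1
        have hb0 : (newTp S π a₀ φ fill c x).ryx f ≠ true := fun hb => hnm ⟨f, hf, hb⟩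
        have hold : S.binary f x c ≠ true := fun hb => slot_back_not_msg h2.2 ⟨f, hf, hb⟩
        constructor
        · rintro ⟨hne, htp, hb⟩
          rw [hbin] at hb
          exact absurd hb hb0
        · rintro (⟨hne, htp, hb, hinv⟩ | ⟨hsl, hb⟩)
          · exact absurd hb hold
          · exact absurd hsl h1
      · have hbin : (modStruc S π Bs a₀ φ fill).binary f x c = S.binary f x c :=
          mod_binary_base (fun h => h1 h.2) h2 f
        constructor
        · rintro ⟨hne, htp, hb⟩
          rw [hbin] at hb
          by_cases hinv : IsInvertible σ (S.tp2 x c)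
          · exact Or.inl ⟨hne, htp, hb, hinv⟩
          · exact absurd (NInv_subset_Slot S π Bs x ⟨hne, htp, ⟨f, hf, hb⟩, hinv⟩) h1
        · rintro (⟨hne, htp, hb, hinv⟩ | ⟨hsl, hb⟩)
          · exact ⟨hne, htp, by rw [hbin]; exact hb⟩
          · exact absurd hsl h1
  have hdisj : Disjoint (Iset S π f x)
      {c | c ∈ SlotSet S π Bs x ∧ (newTp S π a₀ φ fill x c).rxy f = true} := by
    rw [Set.disjoint_left]
    rintro c ⟨-, -, -, hinv⟩ ⟨hsl, -⟩
    exact slot_not_inv hsl hinv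
  have hE : {d | d ∈ NInvSet S π a₀ ∧ (S.tp2 a₀ d).rxy f = true} = Eset S π f a₀ := by
    ext d
    constructor
    · rintro ⟨⟨hne, htp, hm, hni⟩, hb⟩
      exact ⟨hne, htp, hb, hni⟩
    · rintro ⟨hne, htp, hb, hni⟩
      exact ⟨⟨hne, htp, ⟨f, hf, hb⟩, hni⟩, hb⟩
  rw [hset, Set.encard_union_eq hdisj,
    slot_newTp_filter_encard (hφ x hx) hfillmsg hx (fun τ => τ.rxy f = true)
      (fun τ h => ⟨f, hf, h⟩), hE, ← Eset_encard_eq hB hbr hf hx ha₀B,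
    ← Set.encard_union_eq (IE_disjoint S π f x), ← Cset_decomp]
  rfl

theorem mod_inv_unchanged (hB1 : ∀ a ∈ Bs, S.tp1 a = πB) (ha₀B : a₀ ∈ Bs)
    (hfill : LeftOver S π Bs a₀ φ → GoodFor S π πB fill) (x y : A)
    (h : IsInvertible σ ((modStruc S π Bs a₀ φ fill).tp2 x y)) :
    (modStruc S π Bs a₀ φ fill).tp2 x y = S.tp2 x y := by
  by_cases h1 : x ∈ Bs ∧ y ∈ SlotSet S π Bs x
  · rw [(mod_tp2_owner hB1 ha₀B hfill h1.1 h1.2).1] at h ⊢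
    exact absurd h (newTp_good hB1 ha₀B hfill h1.1 h1.2).2.2.2.2.2.1
  by_cases h2 : y ∈ Bs ∧ x ∈ SlotSet S π Bs y
  · rw [(mod_tp2_owner hB1 ha₀B hfill h2.1 h2.2).2] at h ⊢
    exact absurd h.1 (newTp_good hB1 ha₀B hfill h2.1 h2.2).2.2.2.2.1
  · exact mod_tp2_base h1 h2

theorem mod_chromatic (hchr : S.Chromatic) (hB1 : ∀ a ∈ Bs, S.tp1 a = πB) (ha₀B : a₀ ∈ Bs)
    (hfill : LeftOver S π Bs a₀ φ → GoodFor S π πB fill) :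
    (modStruc S π Bs a₀ φ fill).Chromatic := by
  constructor
  · intro a a' hne hinv
    rw [mod_tp1, mod_tp1]
    rw [mod_inv_unchanged hB1 ha₀B hfill a a' hinv] at hinv
    exact hchr.1 a a' hne hinv
  · intro a a' a'' h1 h2 h3 hi1 hi2
    rw [mod_tp1, mod_tp1]
    rw [mod_inv_unchanged hB1 ha₀B hfill a a' hi1] at hi1
    rw [mod_inv_unchanged hB1 ha₀B hfill a' a'' hi2] at hi2
    exact hchr.2 a a' a'' h1 h2 h3 hi1 hi2

theorem mod_realizes (hB1 : ∀ a ∈ Bs, S.tp1 a = πB) (ha₀B : a₀ ∈ Bs)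
    (hfill : LeftOver S π Bs a₀ φ → GoodFor S π πB fill) :
    ∀ τ, Realizes2 (modStruc S π Bs a₀ φ fill) τ → Realizes2 S τ := by
  rintro τ ⟨x, y, hxy, rfl⟩
  by_cases h1 : x ∈ Bs ∧ y ∈ SlotSet S π Bs x
  · rw [(mod_tp2_owner hB1 ha₀B hfill h1.1 h1.2).1]
    exact (newTp_good hB1 ha₀B hfill h1.1 h1.2).2.2.2.2.2.2
  by_cases h2 : y ∈ Bs ∧ x ∈ SlotSet S π Bs y
  · rw [(mod_tp2_owner hB1 ha₀B hfill h2.1 h2.2).2]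
    obtain ⟨u, v, huv, he⟩ := (newTp_good hB1 ha₀B hfill h2.1 h2.2).2.2.2.2.2.2
    exact ⟨v, u, huv.symm, by rw [← he]; rfl⟩
  · rw [mod_tp2_base h1 h2]
    exact ⟨x, y, hxy, rfl⟩

end Obl

end PU
/-- Lemma 6: in a chromatic, Y-branching, (mY+1)²-differentiated structure, the
{π}-profiles of the elements of any π-patch B can be unified by passing to a
({π},B)-approximation. -/
theorem patch_unification (σ : CSig) (m Y : ℕ) (hm : σ.counting.card = m)
    (A : Type) [Countable A] (S : Struc σ A)
    (hchr : S.Chromatic) (hbr : S.Branching Y)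
    (π : OneType σ) (B : Set A) (hB : PiPatch S π B)
    (hdiff : S.Differentiated ((m * Y + 1) ^ 2)) :
    ∃ S' : Struc σ A, PiBApprox S S' {π} B ∧
      ∀ a ∈ B, ∀ b ∈ B, S'.pr {π} a = S'.pr {π} b := by
  classical
  by_cases htriv : ∀ a ∈ B, ∀ b ∈ B, a = b
  · refine ⟨S, ⟨hchr, fun τ h => h, fun a => ⟨rfl, rfl, fun _ => rfl, fun _ => rfl⟩⟩, ?_⟩
    intro a ha b hb
    rw [htriv a ha b hb]
  push_neg at htriv
  obtain ⟨a₁, ha₁, a₂, ha₂, hne12⟩ := htriv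
  have hA : Nonempty A := ⟨a₁⟩
  set πB := S.tp1 a₁ with hπB
  have hB1 : ∀ a ∈ B, S.tp1 a = πB := fun a ha => (hB.1 a ha a₁ ha₁).1
  -- finiteness of the sets of non-invertible message partners
  have hNfin : ∀ a : A, (PU.NInvSet S π a).Finite := by
    intro a
    have hsub : PU.NInvSet S π a ⊆
        ⋃ f ∈ σ.counting, {c : A | c ≠ a ∧ S.binary f a c = true} := by
      rintro c ⟨hne, htp, ⟨f, hf, hb⟩, hninv⟩
      exact Set.mem_iUnion₂.mpr ⟨f, hf, hne, hb⟩
    refine Set.Finite.subset ?_ hsub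
    exact Set.Finite.biUnion (σ.counting.finite_toSet)
      (fun f hf => Set.finite_of_encard_le_coe (hbr a f hf))
  -- choose a₀ ∈ B with minimal number of non-invertible partners
  set g : A → ℕ := fun a => (PU.NInvSet S π a).ncard with hg
  have hKex : {k : ℕ | ∃ a ∈ B, g a = k}.Nonempty := ⟨g a₁, a₁, ha₁, rfl⟩
  obtain ⟨a₀, ha₀B, hga₀⟩ := Nat.sInf_mem hKex
  have hmin : ∀ a ∈ B, g a₀ ≤ g a := fun a ha => hga₀ ▸ Nat.sInf_le ⟨a, ha, rfl⟩
  have hDle : ∀ a ∈ B, (PU.NInvSet S π a₀).encard ≤ (PU.SlotSet S π B a).encard := by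
    intro a ha
    have h1 : (PU.NInvSet S π a₀).encard ≤ (PU.NInvSet S π a).encard := by
      rw [← Set.Finite.cast_ncard_eq (hNfin a₀), ← Set.Finite.cast_ncard_eq (hNfin a)]
      exact_mod_cast hmin a ha
    exact h1.trans (Set.encard_mono (PU.NInv_subset_Slot S π B a))
  -- choose injections of the minimal partner set into each slot set
  have hφex : ∀ a : A, ∃ φa : A → A, a ∈ B →
      Set.MapsTo φa (PU.NInvSet S π a₀) (PU.SlotSet S π B a) ∧
      Set.InjOn φa (PU.NInvSet S π a₀) := by
    intro a
    by_cases ha : a ∈ B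
    · obtain ⟨ff, hf1, hf2⟩ := (hNfin a₀).exists_injOn_of_encard_le (hDle a ha)
      exact ⟨ff, fun _ => ⟨fun d hd => hf1 hd, hf2⟩⟩
    · exact ⟨id, fun h => absurd h ha⟩
  choose φ hφ0 using hφex
  have hφ : ∀ a ∈ B, Set.MapsTo (φ a) (PU.NInvSet S π a₀) (PU.SlotSet S π B a) ∧
      Set.InjOn (φ a) (PU.NInvSet S π a₀) := fun a ha => hφ0 a ha
  -- the filler type
  set FillEx : Prop := (∃ u v : A, u ≠ v ∧ S.tp1 u = πB ∧ S.tp1 v = π ∧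
    ¬ IsMessage σ (S.tp2 u v) ∧ ¬ IsMessage σ (S.tp2 v u)) with hFillEx
  have hfillex : ∃ fl : TwoType σ,
      FillEx → (¬ IsMessage σ fl ∧ PU.GoodFor S π πB fl) := by
    by_cases h : FillEx
    · rw [hFillEx] at h
      obtain ⟨u, v, huv, hu, hv, h1, h2⟩ := h
      refine ⟨S.tp2 u v, fun _ => ⟨h1, PU.tp1_u hu, PU.tp1_d hu, PU.tp1_u hv, PU.tp1_d hv,
        ?_, fun hi => h1 hi.1, u, v, huv, rfl⟩⟩
      rw [PU.tp2_swap]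
      exact h2
    · exact ⟨S.tp2 a₁ a₁, fun h' => absurd h' h⟩
  obtain ⟨fill, hfillpack⟩ := hfillex
  -- a leftover slot forces the existence of a silent pair
  have hLO : PU.LeftOver S π B a₀ φ → FillEx := by
    rintro ⟨a, ha, c, hc, hnc⟩
    by_cases hmsg : IsMessage σ (S.tp2 a c)
    · obtain ⟨f, hf, hbin⟩ := hmsg
      have hcE : c ∈ PU.Eset S π f a := ⟨hc.1, hc.2.1, hbin, PU.slot_not_inv hc⟩
      have hE0 : (PU.Eset S π f a₀).Nonempty := by
        rw [← Set.encard_pos, ← PU.Eset_encard_eq hB hbr hf ha ha₀B]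
        exact Set.encard_pos.mpr ⟨c, hcE⟩
      obtain ⟨d₀, hd₀⟩ := hE0
      have hd₀D : d₀ ∈ PU.NInvSet S π a₀ := ⟨hd₀.1, hd₀.2.1, ⟨f, hf, hd₀.2.2.1⟩, hd₀.2.2.2⟩
      have heS : φ a d₀ ∈ PU.SlotSet S π B a := (hφ a ha).1 hd₀D
      have hce : c ≠ φ a d₀ := fun h => hnc ⟨d₀, hd₀D, h.symm⟩
      have hsub2 : ({c, φ a d₀} : Set A) ⊆ {b : A | S.tp1 b = π} := by
        rintro b hb
        rcases hb with rfl | hb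
        · exact hc.2.1
        · rw [Set.mem_singleton_iff] at hb
          rw [hb]
          exact heS.2.1
      have hVbig : (((m * Y + 1) ^ 2 : ℕ) : ℕ∞) < {b : A | S.tp1 b = π}.encard := by
        rcases hdiff π with h | h
        · exfalso
          have h2le : (2 : ℕ∞) ≤ {b : A | S.tp1 b = π}.encard := by
            rw [← Set.encard_pair hce]
            exact Set.encard_mono hsub2
          have := h2le.trans h
          norm_num at this
        · exact_mod_cast h
      have hsub1 : ({a₁, a₂} : Set A) ⊆ {b : A | S.tp1 b = πB} := by
        rintro b hb
        rcases hb with rfl | hb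
        · rfl
        · rw [Set.mem_singleton_iff] at hb
          rw [hb]
          exact hB1 a₂ ha₂
      have hUbig : (((m * Y + 1) ^ 2 : ℕ) : ℕ∞) < {b : A | S.tp1 b = πB}.encard := by
        rcases hdiff πB with h | h
        · exfalso
          have h2le : (2 : ℕ∞) ≤ {b : A | S.tp1 b = πB}.encard := by
            rw [← Set.encard_pair hne12]
            exact Set.encard_mono hsub1
          have := h2le.trans h
          norm_num at this
        · exact_mod_cast h
      exact PU.exists_silent S m Y hm hbr πB π hUbig hVbig
    · rcases hc.2.2 with ⟨hnB, hback⟩ | ⟨hcB, hm, hni⟩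
      · exact ⟨a, c, Ne.symm hc.1, hB1 a ha, hc.2.1, hmsg, hback⟩
      · exact absurd hm hmsg
  have hfillgood : PU.LeftOver S π B a₀ φ → PU.GoodFor S π πB fill :=
    fun h => (hfillpack (hLO h)).2
  have hfillmsg : PU.LeftOver S π B a₀ φ → ¬ IsMessage σ fill :=
    fun h => (hfillpack (hLO h)).1
  refine ⟨PU.modStruc S π B a₀ φ fill,
    ⟨PU.mod_chromatic hchr hB1 ha₀B hfillgood,
     PU.mod_realizes hB1 ha₀B hfillgood,
     fun a => ⟨PU.mod_tp1 a, PU.mod_pr_compl hB1 ha₀B hfillgood a,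
       fun haB => PU.mod_pr_univ hB1 ha₀B hfillgood haB,
       fun haB => PU.mod_ct hB hbr hB1 ha₀B hfillgood hfillmsg hφ haB⟩⟩, ?_⟩
  intro x hx x' hx'
  funext μ
  by_cases hinv : IsInvertible σ μ.1
  · rw [PU.mod_pr_inv hB1 ha₀B hfillgood x μ hinv,
      PU.mod_pr_inv hB1 ha₀B hfillgood x' μ hinv]
    exact hB.2 x hx x' hx' μ hinv
  · rw [PU.mod_pr_noninv hB1 ha₀B hfillgood hfillmsg hφ hx μ hinv,
      PU.mod_pr_noninv hB1 ha₀B hfillgood hfillmsg hφ hx' μ hinv]
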